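/- If L is a regular language over a finite linearly ordered alphabet Σ whose set of left quotients has cardinality n with n ≥ 2, then the set Dmin(L) of minimal distinguishing words has at most n − 1 elements. -/

import Mathlib

variable {α : Type*}

/-- The left quotient of a language `L` by a word `w`: `w⁻¹L = {x | w ++ x ∈ L}`. -/
def leftQuot (w : List α) (L : Set (List α)) : Set (List α) := {x | w ++ x ∈ L}

/-- Shortlex (quasi-lexicographical) order on words: compare first by length,
then lexicographically. -/
def ShortlexLE [LinearOrder α] (u v : List α) : Prop :=
  u.length < v.length ∨ (u.length = v.length ∧ (u = v ∨ List.Lex (· < ·) u v))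

/-- `w` is the shortlex-minimum of the set of words `S`. -/
def IsShortlexMin [LinearOrder α] (S : Set (List α)) (w : List α) : Prop :=
  w ∈ S ∧ ∀ v ∈ S, ShortlexLE w v

/-- The set of minimal words distinguishing pairs of distinct left quotients of `L`:
for each pair `x, y` with `x⁻¹L ≠ y⁻¹L`, the shortlex-minimum of the symmetric
difference `(x⁻¹L) Δ (y⁻¹L)`. -/
def Dmin [LinearOrder α] (L : Set (List α)) : Set (List α) :=
  {w | ∃ x y : List α, leftQuot x L ≠ leftQuot y L ∧
        IsShortlexMin (symmDiff (leftQuot x L) (leftQuot y L)) w}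

section Aux
variable [LinearOrder α]

/-- Strict shortlex order. -/
def SLT (u v : List α) : Prop :=
  u.length < v.length ∨ (u.length = v.length ∧ List.Lex (· < ·) u v)

lemma slt_trans {u v w : List α} (h1 : SLT u v) (h2 : SLT v w) : SLT u w := by
  rcases h1 with h1 | ⟨e1, l1⟩ <;> rcases h2 with h2 | ⟨e2, l2⟩
  · exact Or.inl (h1.trans h2)
  · exact Or.inl (e2 ▸ h1)
  · exact Or.inl (e1 ▸ h2)
  · exact Or.inr ⟨e1.trans e2, List.lex_trans (fun h₁ h₂ => lt_trans h₁ h₂) l1 l2⟩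

lemma slt_irrefl (u : List α) : ¬ SLT u u := by
  rintro (h | ⟨_, h⟩)
  · exact lt_irrefl _ h
  · exact _root_.irrefl_of (List.Lex (· < ·)) u h

lemma slt_asymm {u v : List α} (h : SLT u v) : ¬ SLT v u :=
  fun h' => slt_irrefl u (slt_trans h h')

lemma slt_trichotomy (u v : List α) : SLT u v ∨ u = v ∨ SLT v u := by
  rcases lt_trichotomy u.length v.length with h | h | h
  · exact Or.inl (Or.inl h)
  · have htr : List.Lex (· < ·) u v ∨ u = v ∨ List.Lex (· < ·) v u :=
      _root_.trichotomous_of (List.Lex (· < ·)) u v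
    rcases htr with hl | hl | hl
    · exact Or.inl (Or.inr ⟨h, hl⟩)
    · exact Or.inr (Or.inl hl)
    · exact Or.inr (Or.inr (Or.inr ⟨h.symm, hl⟩))
  · exact Or.inr (Or.inr (Or.inl h))

lemma shortlexLE_iff {u v : List α} : ShortlexLE u v ↔ u = v ∨ SLT u v := by
  unfold ShortlexLE SLT
  constructor
  · rintro (h | ⟨e, (rfl | h)⟩)
    · exact Or.inr (Or.inl h)
    · exact Or.inl rfl
    · exact Or.inr (Or.inr ⟨e, h⟩)
  · rintro (rfl | h | ⟨e, h⟩)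
    · exact Or.inr ⟨rfl, Or.inl rfl⟩
    · exact Or.inl h
    · exact Or.inr ⟨e, Or.inr h⟩

/-- The set of left quotients of `L`. -/
abbrev QuotSet (L : Set (List α)) : Set (Set (List α)) :=
  {M : Set (List α) | ∃ w : List α, M = leftQuot w L}

/-- Setoid on quotients: agree on all words strictly shortlex-below `w`. -/
def distSetoid (L : Set (List α)) (w : List α) : Setoid (QuotSet L) where
  r M N := ∀ v : List α, SLT v w → (v ∈ M.1 ↔ v ∈ N.1)
  iseqv := ⟨fun _ _ _ => Iff.rfl,
    fun h v hv => (h v hv).symm,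
    fun h1 h2 v hv => (h1 v hv).trans (h2 v hv)⟩

noncomputable def cfun (L : Set (List α)) (w : List α) : ℕ :=
  Nat.card (Quotient (distSetoid L w))

lemma card_lt_of_surj_not_inj {A B : Type*} [Finite A] {f : A → B}
    (hs : Function.Surjective f) (hi : ¬ Function.Injective f) :
    Nat.card B < Nat.card A := by
  have hB : Finite B := Finite.of_surjective f hs
  rcases lt_or_eq_of_le (Nat.card_le_card_of_surjective f hs) with h | h
  · exact h
  · exfalso
    apply hi
    have hinj : Function.Injective (Function.surjInv hs) :=
      Function.injective_surjInv hs
    have hbij : Function.Bijective (Function.surjInv hs) :=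
      (Nat.bijective_iff_injective_and_card _).2 ⟨hinj, h⟩
    intro a1 a2 he
    obtain ⟨b1, rfl⟩ := hbij.2 a1
    obtain ⟨b2, rfl⟩ := hbij.2 a2
    rw [Function.surjInv_eq hs, Function.surjInv_eq hs] at he
    rw [he]

/-- If `w ∈ Dmin L` then the pair of quotients distinguished by `w` is
identified by `distSetoid L w` but the quotients are distinct. -/
lemma dmin_pair {L : Set (List α)} {w : List α} (hw : w ∈ Dmin L) :
    ∃ M N : QuotSet L, M ≠ N ∧ (distSetoid L w).r M N ∧ (w ∈ M.1 ↔ ¬ w ∈ N.1) := by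
  obtain ⟨x, y, hne, hmem, hmin⟩ := hw
  refine ⟨⟨leftQuot x L, x, rfl⟩, ⟨leftQuot y L, y, rfl⟩, ?_, ?_, ?_⟩
  · intro h; exact hne (congrArg Subtype.val h)
  · intro v hv
    by_contra hiff
    have hvmem : v ∈ symmDiff (leftQuot x L) (leftQuot y L) := by
      rw [Set.mem_symmDiff]; tauto
    have := hmin v hvmem
    rcases shortlexLE_iff.1 this with h | h
    · rw [h] at hv; exact slt_irrefl _ hv
    · exact slt_asymm h hv
  · rw [Set.mem_symmDiff] at hmem; tauto

lemma cfun_strict_mono {L : Set (List α)} (hfin : Finite (QuotSet L))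
    {w1 w2 : List α} (hw1 : w1 ∈ Dmin L) (h12 : SLT w1 w2) :
    cfun L w1 < cfun L w2 := by
  obtain ⟨M, N, hMN, hr, hsd⟩ := dmin_pair hw1
  set f : Quotient (distSetoid L w2) → Quotient (distSetoid L w1) :=
    Quotient.map' id (fun a b h v hv => h v (slt_trans hv h12)) with hf
  have hsurj : Function.Surjective f := by
    intro q
    induction q using Quotient.ind with
    | _ a => exact ⟨Quotient.mk _ a, rfl⟩
  have hninj : ¬ Function.Injective f := by
    intro hinj
    have h1 : f (Quotient.mk _ M) = f (Quotient.mk _ N) := by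
      exact Quotient.sound hr
    have h2 := hinj h1
    have h3 : (distSetoid L w2).r M N := Quotient.exact h2
    have := h3 w1 h12
    tauto
  exact card_lt_of_surj_not_inj hsurj hninj

lemma cfun_lt_card {L : Set (List α)} (hfin : Finite (QuotSet L))
    {w : List α} (hw : w ∈ Dmin L) :
    cfun L w < Nat.card (QuotSet L) := by
  obtain ⟨M, N, hMN, hr, _⟩ := dmin_pair hw
  have hsurj : Function.Surjective (Quotient.mk (distSetoid L w)) :=
    Quotient.mk''_surjective
  have hninj : ¬ Function.Injective (Quotient.mk (distSetoid L w)) := by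
    intro hinj
    exact hMN (hinj (Quotient.sound hr))
  exact card_lt_of_surj_not_inj hsurj hninj

end Aux

theorem stmt_13 [Fintype α] [LinearOrder α] (L : Set (List α))
    (hL : Language.IsRegular L) (n : ℕ) (hn : 2 ≤ n)
    (hcard : {M : Set (List α) | ∃ w : List α, M = leftQuot w L}.ncard = n) :
    (Dmin L).Finite ∧ (Dmin L).ncard ≤ n - 1 := by
  have hQfin : (QuotSet L).Finite := by
    by_contra h
    have h' : (QuotSet L).Infinite := h
    rw [h'.ncard] at hcard
    omega
  have hfin : Finite (QuotSet L) := hQfin.to_subtype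
  have hcardQ : Nat.card (QuotSet L) = n := by
    rw [Nat.card_coe_set_eq]; exact hcard
  have hub : ∀ w ∈ Dmin L, cfun L w ∈ Set.Icc 1 (n - 1) := by
    intro w hw
    constructor
    · have : Nonempty (QuotSet L) := ⟨⟨leftQuot [] L, [], rfl⟩⟩
      have : Nonempty (Quotient (distSetoid L w)) := Nonempty.map (Quotient.mk _) this
      have : Finite (Quotient (distSetoid L w)) := Quotient.finite _
      exact Nat.card_pos
    · have := cfun_lt_card hfin hw
      omega
  have hinj : Set.InjOn (cfun L) (Dmin L) := by
    intro w1 h1 w2 h2 he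
    rcases slt_trichotomy w1 w2 with h | h | h
    · exact absurd he (by have := cfun_strict_mono hfin h1 h; omega)
    · exact h
    · exact absurd he (by have := cfun_strict_mono hfin h2 h; omega)
  have himg : (cfun L) '' (Dmin L) ⊆ Set.Icc 1 (n - 1) := by
    rintro _ ⟨w, hw, rfl⟩; exact hub w hw
  have hImgFin : ((cfun L) '' (Dmin L)).Finite :=
    (Set.finite_Icc 1 (n - 1)).subset himg
  have hDfin : (Dmin L).Finite := Set.Finite.of_finite_image hImgFin hinj
  refine ⟨hDfin, ?_⟩
  calc (Dmin L).ncard = ((cfun L) '' (Dmin L)).ncard := (Set.ncard_image_of_injOn hinj).symm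
    _ ≤ (Set.Icc 1 (n - 1)).ncard :=
        Set.ncard_le_ncard himg (Set.finite_Icc 1 (n - 1))
    _ = n - 1 := by rw [← Finset.coe_Icc, Set.ncard_coe_finset, Nat.card_Icc]; omega
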